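/- arXiv:math/0511302 — 3 statements merged into one kernel-verified Lean document; each statement's English description precedes it below -/
import Mathlib

section
/- Let n ≥ 1 and let M be a subgroup of GL(n,ℝ) consisting of matrices with positive determinant. Assume that [M]_c acts transitively on ℝⁿ, i.e. for all x, y ∈ ℝⁿ there exists φ ∈ [M]_c with φ(x) = y. Then the first order jet J¹_c(x₀, M) = {∇φ(x₀) : φ ∈ [M]_c} does not depend on the point x₀ ∈ ℝⁿ, and this common set J_c(M) is a subgroup of GL(n,ℝ) under matrix multiplication: it contains the identity matrix, is closed under products, and is closed under matrix inversion. -/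
open MeasureTheory

noncomputable section

/-- The Jacobian matrix of a map `φ : ℝⁿ → ℝⁿ` at a point `x`:
`(jacobian φ x) i j = ∂φ_i/∂x_j`. -/
def jacobian {n : ℕ} (φ : (Fin n → ℝ) → (Fin n → ℝ)) (x : Fin n → ℝ) :
    Matrix (Fin n) (Fin n) ℝ :=
  Matrix.of fun i j => fderiv ℝ φ x (Pi.single j 1) i

/-- `φ : ℝⁿ → ℝⁿ` is a smooth diffeomorphism. -/
def IsSmoothDiffeo {n : ℕ} (φ : (Fin n → ℝ) → (Fin n → ℝ)) : Prop :=
  ContDiff ℝ (⊤ : ℕ∞) φ ∧ ∃ ψ : (Fin n → ℝ) → (Fin n → ℝ),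
    ContDiff ℝ (⊤ : ℕ∞) ψ ∧ Function.LeftInverse ψ φ ∧ Function.RightInverse ψ φ

/-- Membership in `[M]_c`: a smooth diffeomorphism of `ℝⁿ` whose Jacobian matrix lies in
`M` at every point and such that `φ - id` has compact support. -/
def MemLocC {n : ℕ} (M : Set (Matrix (Fin n) (Fin n) ℝ))
    (φ : (Fin n → ℝ) → (Fin n → ℝ)) : Prop :=
  IsSmoothDiffeo φ ∧ (∀ x, jacobian φ x ∈ M) ∧
    HasCompactSupport (fun x => φ x - x)

/-- Membership in `[M](E)`: additionally the support of `φ - id` is contained in `E`. -/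
def MemLoc {n : ℕ} (M : Set (Matrix (Fin n) (Fin n) ℝ)) (E : Set (Fin n → ℝ))
    (φ : (Fin n → ℝ) → (Fin n → ℝ)) : Prop :=
  MemLocC M φ ∧ tsupport (fun x => φ x - x) ⊆ E

/-- The first order jet `J¹_c(x₀, M) = {∇φ(x₀) : φ ∈ [M]_c}`. -/
def J1c {n : ℕ} (M : Set (Matrix (Fin n) (Fin n) ℝ)) (x₀ : Fin n → ℝ) :
    Set (Matrix (Fin n) (Fin n) ℝ) :=
  { F | ∃ φ, MemLocC M φ ∧ jacobian φ x₀ = F }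

namespace JetAux

variable {n : ℕ} {M : Set (Matrix (Fin n) (Fin n) ℝ)}

lemma jacobian_eq (φ : (Fin n → ℝ) → (Fin n → ℝ)) (x : Fin n → ℝ) :
    jacobian φ x = LinearMap.toMatrix' (fderiv ℝ φ x).toLinearMap := by
  ext i j
  rw [LinearMap.toMatrix'_apply]
  have : (fun j' => if j' = j then (1:ℝ) else 0) = Pi.single j 1 := by
    funext j'; rw [Pi.single_apply]
  clear this
  rfl

lemma jacobian_comp {φ ψ : (Fin n → ℝ) → (Fin n → ℝ)}
    (hφ : Differentiable ℝ φ) (hψ : Differentiable ℝ ψ) (x : Fin n → ℝ) :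
    jacobian (φ ∘ ψ) x = jacobian φ (ψ x) * jacobian ψ x := by
  rw [jacobian_eq, jacobian_eq, jacobian_eq, fderiv_comp x (hφ _) (hψ _),
    ContinuousLinearMap.toLinearMap_comp, LinearMap.toMatrix'_comp]

lemma jacobian_id (x : Fin n → ℝ) : jacobian (id : (Fin n → ℝ) → (Fin n → ℝ)) x = 1 := by
  ext i j
  simp [jacobian, Matrix.one_apply, Pi.single_apply, eq_comm]

lemma memLocC_id (hMone : (1 : Matrix (Fin n) (Fin n) ℝ) ∈ M) :
    MemLocC M (id : (Fin n → ℝ) → (Fin n → ℝ)) := by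
  refine ⟨⟨contDiff_id, id, contDiff_id, fun x => rfl, fun x => rfl⟩,
    fun x => by rw [jacobian_id]; exact hMone, ?_⟩
  have : (fun x : Fin n → ℝ => id x - x) = (fun _ => 0) := by funext x; simp
  rw [this]
  exact HasCompactSupport.zero  -- guess; fix if needed

/-- Translation conjugation. -/
lemma memLocC_translate (w : Fin n → ℝ) {φ : (Fin n → ℝ) → (Fin n → ℝ)}
    (hφ : MemLocC M φ) :
    MemLocC M (fun u => φ (u - w) + w) ∧
      ∀ x, jacobian (fun u => φ (u - w) + w) x = jacobian φ (x - w) := by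
  obtain ⟨⟨hs, ψ, hψs, hl, hr⟩, hjac, hcs⟩ := hφ
  have hd : Differentiable ℝ φ := hs.differentiable (by simp)
  have key : ∀ x : Fin n → ℝ, fderiv ℝ (fun u => φ (u - w) + w) x = fderiv ℝ φ (x - w) := by
    intro x
    have h1 : HasFDerivAt (fun u : Fin n → ℝ => u - w)
        (ContinuousLinearMap.id ℝ (Fin n → ℝ)) x := (hasFDerivAt_id x).sub_const w
    have h2 : HasFDerivAt φ (fderiv ℝ φ (x - w)) (x - w) := (hd (x - w)).hasFDerivAt
    have h3 := (h2.comp x h1).add_const w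
    simpa using h3.fderiv
  have hjw : ∀ x, jacobian (fun u => φ (u - w) + w) x = jacobian φ (x - w) := by
    intro x; unfold jacobian; rw [key x]
  refine ⟨⟨⟨?_, fun u => ψ (u - w) + w, ?_, ?_, ?_⟩, fun x => by rw [hjw]; exact hjac _, ?_⟩, hjw⟩
  · exact (hs.comp (contDiff_id.sub contDiff_const)).add contDiff_const
  · exact (hψs.comp (contDiff_id.sub contDiff_const)).add contDiff_const
  · intro u; simp [hl (u - w)]
  · intro u; simp [hr (u - w)]
  · have heq : (fun u : Fin n → ℝ => (φ (u - w) + w) - u)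
        = (fun v => φ v - v) ∘ (Homeomorph.subRight w) := by
      funext u
      show φ (u - w) + w - u = φ (u - w) - (u - w)
      abel
    rw [heq]
    exact hcs.comp_homeomorph _

def toHomeo {φ ψ : (Fin n → ℝ) → (Fin n → ℝ)} (hφ : Continuous φ) (hψ : Continuous ψ)
    (hl : Function.LeftInverse ψ φ) (hr : Function.RightInverse ψ φ) :
    Homeomorph (Fin n → ℝ) (Fin n → ℝ) :=
  { toFun := φ, invFun := ψ, left_inv := hl, right_inv := hr,
    continuous_toFun := hφ, continuous_invFun := hψ }

lemma memLocC_comp (hMmul : ∀ A ∈ M, ∀ B ∈ M, A * B ∈ M)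
    {φ ψ : (Fin n → ℝ) → (Fin n → ℝ)} (hφ : MemLocC M φ) (hψ : MemLocC M ψ) :
    MemLocC M (φ ∘ ψ) ∧ ∀ x, jacobian (φ ∘ ψ) x = jacobian φ (ψ x) * jacobian ψ x := by
  obtain ⟨⟨hφs, φ', hφ's, hφl, hφr⟩, hφj, hφc⟩ := hφ
  obtain ⟨⟨hψs, ψ', hψ's, hψl, hψr⟩, hψj, hψc⟩ := hψ
  have hjc : ∀ x, jacobian (φ ∘ ψ) x = jacobian φ (ψ x) * jacobian ψ x :=
    jacobian_comp (hφs.differentiable (by simp)) (hψs.differentiable (by simp))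
  refine ⟨⟨⟨hφs.comp hψs, ψ' ∘ φ', hψ's.comp hφ's, ?_, ?_⟩,
    fun x => by rw [hjc]; exact hMmul _ (hφj _) _ (hψj _), ?_⟩, hjc⟩
  · intro x; simp [Function.comp, hφl (ψ x), hψl x]
  · intro x; simp [Function.comp, hψr (φ' x), hφr x]
  · have heq : (fun x : Fin n → ℝ => (φ ∘ ψ) x - x)
        = (fun x => ((fun y => φ y - y) ∘ (toHomeo hψs.continuous hψ's.continuous hψl hψr)) x
            + (ψ x - x)) := by
      funext x
      show φ (ψ x) - x = (φ (ψ x) - ψ x) + (ψ x - x)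
      abel
    rw [heq]
    exact (hφc.comp_homeomorph _).add hψc

lemma memLocC_inv (hMinv : ∀ A ∈ M, A⁻¹ ∈ M)
    {φ : (Fin n → ℝ) → (Fin n → ℝ)} (hφ : MemLocC M φ) :
    ∃ ψ, MemLocC M ψ ∧ ∀ x, jacobian ψ (φ x) = (jacobian φ x)⁻¹ := by
  obtain ⟨⟨hφs, ψ, hψs, hl, hr⟩, hφj, hφc⟩ := hφ
  have hdφ : Differentiable ℝ φ := hφs.differentiable (by simp)
  have hdψ : Differentiable ℝ ψ := hψs.differentiable (by simp)
  -- chain rule from ψ ∘ φ = id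
  have hkey : ∀ x, jacobian ψ (φ x) = (jacobian φ x)⁻¹ := by
    intro x
    have hcomp : ψ ∘ φ = id := funext hl
    have : jacobian ψ (φ x) * jacobian φ x = 1 := by
      rw [← jacobian_comp hdψ hdφ x, hcomp, jacobian_id]
    exact (Matrix.inv_eq_left_inv this).symm
  refine ⟨ψ, ⟨⟨hψs, φ, hφs, hr, hl⟩, ?_, ?_⟩, hkey⟩
  · intro y
    have h1 : jacobian ψ y = (jacobian φ (ψ y))⁻¹ := by
      conv_lhs => rw [← hr y]
      exact hkey (ψ y)
    rw [h1]
    exact hMinv _ (hφj _)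
  · have heq : (fun y : Fin n → ℝ => ψ y - y)
        = (fun x => -(φ x - x)) ∘ (toHomeo hψs.continuous hφs.continuous hr hl) := by
      funext y
      show ψ y - y = -(φ (ψ y) - ψ y)
      rw [hr y]; abel
    rw [heq]
    exact hφc.neg.comp_homeomorph _

end JetAux

/-- if `[M]_c` acts transitively on `ℝⁿ`, then the first order jet
`J¹_c(x₀, M)` does not depend on `x₀`, and this common set is a subgroup of `GL(n,ℝ)`:
it contains the identity, is closed under products and under matrix inversion. -/
theorem jet_independent_and_subgroup {n : ℕ} (hn : 1 ≤ n)
    (M : Set (Matrix (Fin n) (Fin n) ℝ))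
    (hMdet : ∀ A ∈ M, 0 < A.det)
    (hMone : (1 : Matrix (Fin n) (Fin n) ℝ) ∈ M)
    (hMmul : ∀ A ∈ M, ∀ B ∈ M, A * B ∈ M)
    (hMinv : ∀ A ∈ M, A⁻¹ ∈ M)
    (htrans : ∀ x y : Fin n → ℝ, ∃ φ, MemLocC M φ ∧ φ x = y) :
    (∀ x₀ x₁ : Fin n → ℝ, J1c M x₀ = J1c M x₁) ∧
    (1 : Matrix (Fin n) (Fin n) ℝ) ∈ J1c M 0 ∧
    (∀ A ∈ J1c M 0, ∀ B ∈ J1c M 0, A * B ∈ J1c M 0) ∧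
    (∀ A ∈ J1c M 0, A⁻¹ ∈ J1c M 0) := by
  classical
  have hindep : ∀ x₀ x₁ : Fin n → ℝ, J1c M x₀ = J1c M x₁ := by
    have h : ∀ (x w : Fin n → ℝ), J1c M x ⊆ J1c M (x + w) := by
      intro x w F hF
      obtain ⟨φ, hφ, hjac⟩ := hF
      obtain ⟨hmem, hjw⟩ := JetAux.memLocC_translate (M := M) w hφ
      refine ⟨_, hmem, ?_⟩
      rw [hjw]
      simpa using hjac
    intro x₀ x₁
    apply Set.Subset.antisymm
    · simpa using h x₀ (x₁ - x₀)
    · simpa using h x₁ (x₀ - x₁)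
  refine ⟨hindep, ⟨id, JetAux.memLocC_id hMone, JetAux.jacobian_id 0⟩, ?_, ?_⟩
  · intro A hA B hB
    obtain ⟨φ', hφ', hB'⟩ := hB
    have hA' : A ∈ J1c M (φ' 0) := by rw [← hindep 0 (φ' 0)]; exact hA
    obtain ⟨ψ, hψ, hA''⟩ := hA'
    obtain ⟨hmem, hjc⟩ := JetAux.memLocC_comp hMmul hψ hφ'
    exact ⟨ψ ∘ φ', hmem, by rw [hjc 0, hA'', hB']⟩
  · intro A hA
    obtain ⟨φ, hφ, hAeq⟩ := hA
    obtain ⟨ψ, hψ, hj⟩ := JetAux.memLocC_inv hMinv hφ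
    rw [hindep 0 (φ 0)]
    exact ⟨ψ, hψ, by rw [hj 0, hAeq]⟩
end
end

section
/- Let n ≥ 1, let M be a subgroup of GL(n,ℝ) consisting of matrices with positive determinant, and let A, B ⊆ ℝⁿ be nonempty open sets with A bounded. Then there exists an affine homothety-translation f ∈ 𝒜, f(x) = x₁ + ε(x − x₀) with ε > 0 and x₀, x₁ ∈ ℝⁿ, such that the map φ ↦ f ∘ φ ∘ f⁻¹ is well defined from [M](A) to [M](B) and is injective. -/
open MeasureTheory

noncomputable section

private lemma key_cancel {n : ℕ} {ε : ℝ} (hε : ε ≠ 0) (a b v : Fin n → ℝ) :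
    a + ε⁻¹ • (b + ε • (v - a) - b) = v := by
  rw [add_sub_cancel_left, smul_smul, inv_mul_cancel₀ hε, one_smul]
  abel

private lemma key_cancel' {n : ℕ} {ε : ℝ} (hε : ε ≠ 0) (a b v : Fin n → ℝ) :
    b + ε • (a + ε⁻¹ • (v - b) - a) = v := by
  have h := key_cancel (inv_ne_zero hε) b a v
  rwa [inv_inv] at h

/-- for nonempty open sets `A, B ⊆ ℝⁿ` with `A` bounded, there is an affine
homothety-translation `f(x) = x₁ + ε(x − x₀)` (with inverse `f⁻¹(y) = x₀ + ε⁻¹(y − x₁)`)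
such that `φ ↦ f ∘ φ ∘ f⁻¹` is a well defined injective map from `[M](A)` to `[M](B)`. -/
theorem conjugation_map_between_local_groups {n : ℕ} (hn : 1 ≤ n)
    (M : Set (Matrix (Fin n) (Fin n) ℝ))
    (hMdet : ∀ A ∈ M, 0 < A.det)
    (hMone : (1 : Matrix (Fin n) (Fin n) ℝ) ∈ M)
    (hMmul : ∀ A ∈ M, ∀ B ∈ M, A * B ∈ M)
    (hMinv : ∀ A ∈ M, A⁻¹ ∈ M)
    (A B : Set (Fin n → ℝ))
    (hAo : IsOpen A) (hAne : A.Nonempty) (hAb : Bornology.IsBounded A)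
    (hBo : IsOpen B) (hBne : B.Nonempty) :
    ∃ (x₀ x₁ : Fin n → ℝ) (ε : ℝ), 0 < ε ∧
      (∀ φ, MemLoc M A φ →
        MemLoc M B (fun x => x₁ + ε • (φ (x₀ + ε⁻¹ • (x - x₁)) - x₀))) ∧
      (∀ φ ψ, MemLoc M A φ → MemLoc M A ψ →
        (fun x => x₁ + ε • (φ (x₀ + ε⁻¹ • (x - x₁)) - x₀)) =
          (fun x => x₁ + ε • (ψ (x₀ + ε⁻¹ • (x - x₁)) - x₀)) → φ = ψ) := by
  obtain ⟨a, ha⟩ := hAne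
  obtain ⟨b, hb⟩ := hBne
  obtain ⟨r, hr, hball⟩ := Metric.isOpen_iff.mp hBo b hb
  obtain ⟨R, hR⟩ := hAb.subset_closedBall a
  have hR0 : 0 ≤ R := by
    have := hR ha
    simpa using Metric.mem_closedBall.mp this
  set R' : ℝ := R + 1 with hR'def
  have hR'pos : 0 < R' := by linarith
  have hAR : A ⊆ Metric.closedBall a R' :=
    hR.trans (Metric.closedBall_subset_closedBall (by linarith))
  set ε : ℝ := r / (2 * R') with hεdef
  have hε : 0 < ε := div_pos hr (by linarith)
  refine ⟨a, b, ε, hε, ?_, ?_⟩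
  · rintro φ ⟨⟨⟨hφs, ψ, hψs, hlψ, hrψ⟩, hφJ, hφK⟩, hφA⟩
    have hc'cont : ContDiff ℝ (⊤ : ℕ∞) (fun x : Fin n → ℝ => a + ε⁻¹ • (x - b)) :=
      contDiff_const.add ((contDiff_id.sub contDiff_const).const_smul ε⁻¹)
    have hconjs : ContDiff ℝ (⊤ : ℕ∞) (fun x => b + ε • (φ (a + ε⁻¹ • (x - b)) - a)) :=
      contDiff_const.add (((hφs.comp hc'cont).sub contDiff_const).const_smul ε)
    have hconjψ : ContDiff ℝ (⊤ : ℕ∞) (fun x => b + ε • (ψ (a + ε⁻¹ • (x - b)) - a)) :=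
      contDiff_const.add (((hψs.comp hc'cont).sub contDiff_const).const_smul ε)
    -- derivative of the conjugated map
    have hfd : ∀ x, HasFDerivAt (fun x => b + ε • (φ (a + ε⁻¹ • (x - b)) - a))
        (fderiv ℝ φ (a + ε⁻¹ • (x - b))) x := by
      intro x
      have h1 : HasFDerivAt (fun x : Fin n → ℝ => a + ε⁻¹ • (x - b))
          (ε⁻¹ • ContinuousLinearMap.id ℝ (Fin n → ℝ)) x :=
        (((hasFDerivAt_id x).sub_const b).const_smul ε⁻¹).const_add a
      have h2 : HasFDerivAt φ (fderiv ℝ φ (a + ε⁻¹ • (x - b))) (a + ε⁻¹ • (x - b)) :=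
        ((hφs.differentiable (by simp)) (a + ε⁻¹ • (x - b))).hasFDerivAt
      have h3 := h2.comp x h1
      have h4 := ((h3.sub_const a).const_smul ε).const_add b
      have hD : ε • ((fderiv ℝ φ (a + ε⁻¹ • (x - b))).comp
          (ε⁻¹ • ContinuousLinearMap.id ℝ (Fin n → ℝ)))
          = fderiv ℝ φ (a + ε⁻¹ • (x - b)) := by
        ext v
        simp [smul_smul, mul_inv_cancel₀ hε.ne']
      rw [hD] at h4
      exact h4
    have hJ : ∀ x, jacobian (fun x => b + ε • (φ (a + ε⁻¹ • (x - b)) - a)) x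
        = jacobian φ (a + ε⁻¹ • (x - b)) := by
      intro x
      unfold jacobian
      rw [(hfd x).fderiv]
    -- the difference with the identity
    have hg : ∀ x, (b + ε • (φ (a + ε⁻¹ • (x - b)) - a)) - x
        = ε • (φ (a + ε⁻¹ • (x - b)) - (a + ε⁻¹ • (x - b))) := by
      intro x
      generalize φ (a + ε⁻¹ • (x - b)) = v
      simp only [smul_sub, smul_add, smul_smul, mul_inv_cancel₀ hε.ne', one_smul]
      abel
    have hsupp : Function.support (fun x => (b + ε • (φ (a + ε⁻¹ • (x - b)) - a)) - x)
        ⊆ (fun x : Fin n → ℝ => a + ε⁻¹ • (x - b)) ⁻¹' (tsupport fun x => φ x - x) := by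
      intro x hx
      have hne : φ (a + ε⁻¹ • (x - b)) - (a + ε⁻¹ • (x - b)) ≠ 0 := by
        intro h0
        apply hx
        simp only [hg x, h0, smul_zero]
      exact subset_tsupport _ hne
    have htsupp : tsupport (fun x => (b + ε • (φ (a + ε⁻¹ • (x - b)) - a)) - x)
        ⊆ (fun x : Fin n → ℝ => a + ε⁻¹ • (x - b)) ⁻¹' (tsupport fun x => φ x - x) :=
      closure_minimal hsupp ((isClosed_tsupport _).preimage hc'cont.continuous)
    have hcc' : ∀ x : Fin n → ℝ, b + ε • ((a + ε⁻¹ • (x - b)) - a) = x :=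
      fun x => key_cancel' hε.ne' a b x
    have hpre : (fun x : Fin n → ℝ => a + ε⁻¹ • (x - b)) ⁻¹' (tsupport fun x => φ x - x)
        ⊆ (fun y : Fin n → ℝ => b + ε • (y - a)) '' (tsupport fun x => φ x - x) := by
      intro x hx
      exact ⟨a + ε⁻¹ • (x - b), hx, hcc' x⟩
    have hccont : Continuous (fun y : Fin n → ℝ => b + ε • (y - a)) := by
      fun_prop
    have hK : HasCompactSupport (fun x => (b + ε • (φ (a + ε⁻¹ • (x - b)) - a)) - x) :=
      IsCompact.of_isClosed_subset (IsCompact.image hφK hccont) (isClosed_tsupport _)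
        (htsupp.trans hpre)
    have hB : tsupport (fun x => (b + ε • (φ (a + ε⁻¹ • (x - b)) - a)) - x) ⊆ B := by
      intro x hx
      have hx' : a + ε⁻¹ • (x - b) ∈ A := hφA (htsupp hx)
      have hd : ‖(a + ε⁻¹ • (x - b)) - a‖ ≤ R' := by
        have := hAR hx'
        rw [Metric.mem_closedBall, dist_eq_norm] at this
        exact this
      apply hball
      have hxb : x - b = ε • ((a + ε⁻¹ • (x - b)) - a) :=
        sub_eq_iff_eq_add'.mpr (hcc' x).symm
      rw [Metric.mem_ball, dist_eq_norm, hxb, norm_smul]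
      calc ‖ε‖ * ‖(a + ε⁻¹ • (x - b)) - a‖ ≤ ε * R' := by
            rw [Real.norm_eq_abs, abs_of_pos hε]
            exact mul_le_mul_of_nonneg_left hd hε.le
        _ = r / 2 := by
            rw [hεdef]; field_simp
        _ < r := by linarith
    refine ⟨⟨⟨hconjs, fun x => b + ε • (ψ (a + ε⁻¹ • (x - b)) - a), hconjψ, ?_, ?_⟩,
      fun x => ?_, hK⟩, hB⟩
    · intro x
      show b + ε • (ψ (a + ε⁻¹ • ((b + ε • (φ (a + ε⁻¹ • (x - b)) - a)) - b)) - a) = x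
      rw [key_cancel hε.ne', hlψ, key_cancel' hε.ne']
    · intro x
      show b + ε • (φ (a + ε⁻¹ • ((b + ε • (ψ (a + ε⁻¹ • (x - b)) - a)) - b)) - a) = x
      rw [key_cancel hε.ne', hrψ, key_cancel' hε.ne']
    · rw [hJ x]
      exact hφJ _
  · intro φ ψ hφ hψ h
    funext y
    have h2 := congrFun h (b + ε • (y - a))
    rw [key_cancel hε.ne' a b y] at h2
    have h3 := add_left_cancel h2
    have h4 := smul_right_injective (Fin n → ℝ) hε.ne' h3
    exact sub_left_inj.mp h4
end
end

section
/- Let n ≥ 1 and let w : ℝⁿ × GL(n,ℝ)⁺ → ℝ be twice continuously differentiable in the matrix variable, where GL(n,ℝ)⁺ is the open set of matrices with positive determinant. Define the 1-form Dw by Dw(y,F)(H) = w(y,F)·tr(H) − Σ_{i,j} (∂w/∂F_{ij})(y,F)·(F·H)_{ij} for H ∈ ℝ^{n×n}, and for a 1-form ω (a map assigning to (y,F) a linear functional on ℝ^{n×n}, differentiable in F) define the 2-form Dω by Dω(y,F)(H,P) = D(ω_H)(y,F)(P) − D(ω_P)(y,F)(H) + ω(y,F)(P·H − H·P), where ω_H(y,F)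 := ω(y,F)(H) for a fixed matrix H. Then D(Dw) = 0, i.e. for all y ∈ ℝⁿ, all F ∈ GL(n,ℝ)⁺, and all H, P ∈ ℝ^{n×n}: D(Dw)(y,F)(H,P) = 0. -/
open MeasureTheory

noncomputable section

/-- Partial derivative of a function of a matrix with respect to the entry `(i,j)`,
defined as a directional derivative along the standard basis matrix `E_{ij}`. -/
def pderivF {n : ℕ} (W : Matrix (Fin n) (Fin n) ℝ → ℝ)
    (F : Matrix (Fin n) (Fin n) ℝ) (i j : Fin n) : ℝ :=
  deriv (fun t : ℝ => W (F + t • Matrix.single i j 1)) 0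

/-- The derivation `D : Λ⁰(M) → Λ¹(M)`:
`Dw(y,F)(H) = w(y,F)·tr(H) − Σ_{i,j} (∂w/∂F_{ij})(y,F)·(F·H)_{ij}`. -/
def Dop {n : ℕ} (w : (Fin n → ℝ) → Matrix (Fin n) (Fin n) ℝ → ℝ)
    (y : Fin n → ℝ) (F H : Matrix (Fin n) (Fin n) ℝ) : ℝ :=
  w y F * H.trace - ∑ i, ∑ j, pderivF (w y) F i j * (F * H) i j

/-- The derivation `D : Λ¹(M) → Λ²(M)`:
`Dω(y,F)(H,P) = D(ω_H)(y,F)(P) − D(ω_P)(y,F)(H) + ω(y,F)([P,H])`. -/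
def Dop1 {n : ℕ}
    (ω : (Fin n → ℝ) → Matrix (Fin n) (Fin n) ℝ → Matrix (Fin n) (Fin n) ℝ → ℝ)
    (y : Fin n → ℝ) (F H P : Matrix (Fin n) (Fin n) ℝ) : ℝ :=
  Dop (fun y' F' => ω y' F' H) y F P - Dop (fun y' F' => ω y' F' P) y F H
    + ω y F (P * H - H * P)

/-!
On `GL(n,ℝ)⁺`, `Dw(F)(K) = w(F) tr K - X_K w(F)`, where `X_K(A) = A K` are the left-invariant
vector fields. In `D(Dw)(H,P)` the trace terms cancel in pairs, leaving
`X_P X_H w - X_H X_P w - X_{[P,H]} w`, which vanishes because `[X_P, X_H] = X_{[P,H]}` and the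
second derivative of a `C²` function is symmetric.
-/

theorem Matrix.sum_sum_apply_single_mul {R m n : Type*} [CommSemiring R] [Fintype m] [Fintype n]
    [DecidableEq m] [DecidableEq n] (φ : Matrix m n R →ₗ[R] R) (M : Matrix m n R) :
    ∑ i, ∑ j, φ (Matrix.single i j 1) * M i j = φ M := by
  conv_rhs => rw [Matrix.matrix_eq_sum_single M]
  simp only [map_sum]
  refine Finset.sum_congr rfl fun i _ => Finset.sum_congr rfl fun j _ => ?_
  rw [show Matrix.single i j (M i j) = M i j • Matrix.single i j 1 by
    rw [Matrix.smul_single, smul_eq_mul, mul_one], map_smul, smul_eq_mul, mul_comm]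

/- The entrywise sup norm. Unlike the one of `Matrix.Norms.Elementwise`, this instance induces
`instTopologicalSpaceMatrix` up to reducible unfolding, so it does not obstruct rewriting. -/
local instance Matrix.entrywiseNormedAddCommGroup {m : Type*} [Fintype m] :
    NormedAddCommGroup (Matrix m m ℝ) :=
  inferInstanceAs (NormedAddCommGroup (m → m → ℝ))

local instance Matrix.entrywiseNormedSpace {m : Type*} [Fintype m] :
    NormedSpace ℝ (Matrix m m ℝ) :=
  inferInstanceAs (NormedSpace ℝ (m → m → ℝ))

section MatrixCalculus

variable {m : Type*} [Fintype m] [DecidableEq m]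

theorem Matrix.hasFDerivAt_mul_const (K A : Matrix m m ℝ) :
    HasFDerivAt (fun B : Matrix m m ℝ => B * K)
      (LinearMap.mulRight ℝ K).toContinuousLinearMap A :=
  (LinearMap.mulRight ℝ K).toContinuousLinearMap.hasFDerivAt

theorem Matrix.lieBracket_mul_const (P H A : Matrix m m ℝ) :
    VectorField.lieBracket ℝ (· * P) (· * H) A = A * (P * H - H * P) := by
  rw [VectorField.lieBracket, (Matrix.hasFDerivAt_mul_const _ _).fderiv,
    (Matrix.hasFDerivAt_mul_const _ _).fderiv]
  simp [Matrix.mul_sub, Matrix.mul_assoc]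

end MatrixCalculus

section Derivations

variable {n : ℕ}

theorem pderivF_eq_fderiv {W : Matrix (Fin n) (Fin n) ℝ → ℝ} {F : Matrix (Fin n) (Fin n) ℝ}
    (hW : DifferentiableAt ℝ W F) (i j : Fin n) :
    pderivF W F i j = fderiv ℝ W F (Matrix.single i j 1) := by
  have hline : HasDerivAt (fun t : ℝ => F + t • Matrix.single i j 1) (Matrix.single i j 1) 0 := by
    simpa using ((hasDerivAt_id (0 : ℝ)).smul_const (Matrix.single i j (1 : ℝ))).const_add F
  have hW' : HasFDerivAt W (fderiv ℝ W F) (F + (0 : ℝ) • Matrix.single i j 1) := by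
    simpa using hW.hasFDerivAt
  exact (hW'.comp_hasDerivAt 0 hline).deriv

theorem Dop_eq_fderiv {w : (Fin n → ℝ) → Matrix (Fin n) (Fin n) ℝ → ℝ} {y : Fin n → ℝ}
    {A : Matrix (Fin n) (Fin n) ℝ} (hw : DifferentiableAt ℝ (w y) A)
    (K : Matrix (Fin n) (Fin n) ℝ) :
    Dop w y A K = w y A * K.trace - fderiv ℝ (w y) A (A * K) := by
  simp only [Dop, pderivF_eq_fderiv hw]
  exact congrArg _ (Matrix.sum_sum_apply_single_mul (fderiv ℝ (w y) A).toLinearMap (A * K))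

theorem Dop_Dop_eq_fderiv {w : (Fin n → ℝ) → Matrix (Fin n) (Fin n) ℝ → ℝ} {y : Fin n → ℝ}
    {F : Matrix (Fin n) (Fin n) ℝ} (hw : ContDiffAt ℝ 2 (w y) F)
    (H P : Matrix (Fin n) (Fin n) ℝ) :
    Dop (fun y' F' => Dop w y' F' H) y F P = Dop w y F H * P.trace
      - (fderiv ℝ (w y) F (F * P) * H.trace
        - fderiv ℝ (fun A => fderiv ℝ (w y) A (A * H)) F (F * P)) := by
  have hw_near : ∀ᶠ A in nhds F, DifferentiableAt ℝ (w y) A :=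
    (hw.eventually (by simp)).mono fun A hA => hA.differentiableAt (by simp)
  have hDop_near : (fun A => Dop w y A H) =ᶠ[nhds F]
      fun A => w y A * H.trace - fderiv ℝ (w y) A (A * H) :=
    hw_near.mono fun A hA => Dop_eq_fderiv hA H
  have hwF : DifferentiableAt ℝ (w y) F := hw.differentiableAt (by simp)
  have hXw : DifferentiableAt ℝ (fun A => fderiv ℝ (w y) A (A * H)) F :=
    ((hw.fderiv_right (m := 1) (by norm_num)).differentiableAt (by simp)).clm_apply
      (Matrix.hasFDerivAt_mul_const H F).differentiableAt
  have hDop : DifferentiableAt ℝ (fun A => Dop w y A H) F :=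
    hDop_near.differentiableAt_iff.mpr ((hwF.mul_const _).sub hXw)
  rw [Dop_eq_fderiv hDop, hDop_near.fderiv_eq, fderiv_fun_sub (hwF.mul_const _) hXw,
    fderiv_mul_const hwF, sub_apply, smul_apply, smul_eq_mul, mul_comm H.trace]

end Derivations

theorem D_squared_eq_zero_general {n : ℕ}
    (w : (Fin n → ℝ) → Matrix (Fin n) (Fin n) ℝ → ℝ)
    (hw : ∀ y : Fin n → ℝ, ContDiffOn ℝ 2 (fun A : Fin n → Fin n → ℝ => w y (Matrix.of A))
      {A : Fin n → Fin n → ℝ | 0 < (Matrix.of A).det}) :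
    ∀ (y : Fin n → ℝ) (F : Matrix (Fin n) (Fin n) ℝ), 0 < F.det →
      ∀ H P : Matrix (Fin n) (Fin n) ℝ, Dop1 (fun y' F' H' => Dop w y' F' H') y F H P = 0 := by
  intro y F hF H P
  have hGL : IsOpen {A : Matrix (Fin n) (Fin n) ℝ | 0 < A.det} :=
    isOpen_lt continuous_const continuous_id.matrix_det
  have hwF : ContDiffAt ℝ 2 (w y) F := (hw y).contDiffAt (hGL.mem_nhds hF)
  have hbracket := VectorField.fderiv_apply_lieBracket hwF (by simp)
    (Matrix.hasFDerivAt_mul_const H F).differentiableAt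
    (Matrix.hasFDerivAt_mul_const P F).differentiableAt
  rw [Matrix.lieBracket_mul_const] at hbracket
  simp only [Dop1, Dop_Dop_eq_fderiv hwF, Dop_eq_fderiv (hwF.differentiableAt (by simp))]
  rw [Matrix.trace_sub, Matrix.trace_mul_comm, hbracket]
  ring

/-- the sequence `Λ⁰(M) → Λ¹(M) → Λ²(M)` is semi-exact: `D(Dw) = 0` on
`GL(n,ℝ)⁺` for any `w` twice continuously differentiable in the matrix variable. -/
theorem D_squared_eq_zero {n : ℕ} (hn : 1 ≤ n)
    (w : (Fin n → ℝ) → Matrix (Fin n) (Fin n) ℝ → ℝ)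
    (hw : ∀ y : Fin n → ℝ, ContDiffOn ℝ 2 (fun A : Fin n → Fin n → ℝ => w y (Matrix.of A))
      {A : Fin n → Fin n → ℝ | 0 < (Matrix.of A).det}) :
    ∀ (y : Fin n → ℝ) (F : Matrix (Fin n) (Fin n) ℝ), 0 < F.det →
      ∀ H P : Matrix (Fin n) (Fin n) ℝ, Dop1 (fun y' F' H' => Dop w y' F' H') y F H P = 0 :=
  D_squared_eq_zero_general w hw
end
end
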